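/- Let m_X, m_Y, Ω_X, Ω_Y, α, γ̄, C > 0 be real numbers, set θ = m_YΩ_X/(m_YΩ_X + m_XΩ_Y) and δ = m_XΩ_Y/(m_YΩ_X + m_XΩ_Y), and let f be the α-Beaulieu-Xie shadowed SNR probability density with normalizing constant C. Then for every real k ≥ 0, ∫₀^∞ γ^k f(γ) dγ = γ̄^k · C^{2k/α} · (Γ(m_X + 2k/α)/Γ(m_X)) · θ^{m_Y} · ₂F₁(m_Y, m_X + 2k/α; m_X; δ), where the ₂F₁ series converges since 0 ≤ δ < 1. -/

import Mathlib

open Real MeasureTheory Set Filter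

/-- Pochhammer symbol `(q)_n = q (q+1) ⋯ (q+n-1)`, with `(q)_0 = 1`. -/
noncomputable def poch (q : ℝ) (n : ℕ) : ℝ := ∏ i ∈ Finset.range n, (q + i)

/-- Confluent (Kummer) hypergeometric function `₁F₁(a; b; z)`. -/
noncomputable def oneF1 (a b z : ℝ) : ℝ :=
  ∑' n : ℕ, (poch a n / poch b n) * z ^ n / (n.factorial : ℝ)

/-- Gauss hypergeometric function `₂F₁(a, b; c; z)`. -/
noncomputable def twoF1 (a b c z : ℝ) : ℝ :=
  ∑' n : ℕ, (poch a n * poch b n / poch c n) * z ^ n / (n.factorial : ℝ)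

/-- Confluent Appell (Humbert) function `Φ₂(b₁, b₂; c; x, y)`. -/
noncomputable def Phi2 (b₁ b₂ c x y : ℝ) : ℝ :=
  ∑' p : ℕ × ℕ, (poch b₁ p.1 * poch b₂ p.2 / poch c (p.1 + p.2)) *
    x ^ p.1 * y ^ p.2 / ((p.1.factorial : ℝ) * (p.2.factorial : ℝ))

/-- The α-Beaulieu-Xie shadowed SNR probability density with parameters
`mX, mY, ΩX, ΩY, α`, average SNR `γbar` and normalizing constant `C`, where
`θ = mY ΩX / (mY ΩX + mX ΩY)` and `δ = mX ΩY / (mY ΩX + mX ΩY)`. -/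
noncomputable def aBXpdf (mX mY ΩX ΩY α γbar C γ : ℝ) : ℝ :=
  (α * (mY * ΩX / (mY * ΩX + mX * ΩY)) ^ mY / (2 * C ^ mX * Real.Gamma mX * γbar)) *
    (γ / γbar) ^ (α * mX / 2 - 1) * Real.exp (-(1 / C) * (γ / γbar) ^ (α / 2)) *
    oneF1 mY mX ((mX * ΩY / (mY * ΩX + mX * ΩY)) / C * (γ / γbar) ^ (α / 2))

lemma poch_pos {q : ℝ} (hq : 0 < q) (n : ℕ) : 0 < poch q n :=
  Finset.prod_pos fun i _ => by positivity

lemma poch_succ (q : ℝ) (n : ℕ) : poch q (n + 1) = poch q n * (q + n) :=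
  Finset.prod_range_succ _ _

lemma Gamma_add_nat {s : ℝ} (hs : 0 < s) (n : ℕ) :
    Real.Gamma (s + n) = poch s n * Real.Gamma s := by
  induction n with
  | zero => simp [poch]
  | succ n ih =>
      have h2 : (0:ℝ) < s + n := by positivity
      push_cast
      rw [show s + ((n : ℝ) + 1) = (s + n) + 1 by ring, Real.Gamma_add_one h2.ne', ih, poch_succ]
      ring

lemma tendsto_add_div_add (c d : ℝ) (hd : 0 < d) :
    Tendsto (fun n : ℕ => (c + n) / (d + n)) atTop (nhds 1) := by
  have h : ∀ᶠ n : ℕ in atTop, (c / n + 1) / (d / n + 1) = (c + n) / (d + n) := by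
    filter_upwards [eventually_gt_atTop 0] with n hn
    have hn' : (0:ℝ) < n := by exact_mod_cast hn
    have h1 : (0:ℝ) < d + n := by positivity
    field_simp
  refine Tendsto.congr' h ?_
  have hnum : Tendsto (fun n : ℕ => c / n + 1) atTop (nhds 1) := by
    simpa using (tendsto_const_div_atTop_nhds_zero_nat c).add (tendsto_const_nhds (x := (1:ℝ)))
  have hden : Tendsto (fun n : ℕ => d / n + 1) atTop (nhds 1) := by
    simpa using (tendsto_const_div_atTop_nhds_zero_nat d).add (tendsto_const_nhds (x := (1:ℝ)))
  have := hnum.div hden one_ne_zero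
  rw [div_one] at this
  exact this

lemma summable_hyper {a b c δ : ℝ} (ha : 0 < a) (hb : 0 < b) (hc : 0 < c)
    (hδ0 : 0 < δ) (hδ1 : δ < 1) :
    Summable (fun n : ℕ => (poch a n * poch b n / poch c n) * δ ^ n / (n.factorial : ℝ)) := by
  set f : ℕ → ℝ := fun n => (poch a n * poch b n / poch c n) * δ ^ n / (n.factorial : ℝ) with hf
  have hfpos : ∀ n, 0 < f n := fun n => by
    have h1 := poch_pos ha n; have h2 := poch_pos hb n; have h3 := poch_pos hc n
    have h4 : (0:ℝ) < n.factorial := by exact_mod_cast n.factorial_pos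
    positivity
  apply summable_of_ratio_test_tendsto_lt_one hδ1 (Eventually.of_forall fun n => (hfpos n).ne')
  have key : ∀ n : ℕ, ‖f (n+1)‖ / ‖f n‖ = δ * ((a + n) / (1 + n)) * ((b + n) / (c + n)) := by
    intro n
    rw [Real.norm_of_nonneg (hfpos _).le, Real.norm_of_nonneg (hfpos _).le, hf]
    simp only [poch_succ, pow_succ, Nat.factorial_succ, Nat.cast_mul, Nat.cast_add, Nat.cast_one]
    have h1 := (poch_pos ha n).ne'
    have h2 := (poch_pos hb n).ne'
    have h3 := (poch_pos hc n).ne'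
    have h4 : ((n.factorial : ℝ)) ≠ 0 := by positivity
    have h5 : (0:ℝ) < c + n := by positivity
    have h6 : (0:ℝ) < 1 + (n:ℝ) := by positivity
    have h7 : δ ≠ 0 := hδ0.ne'
    field_simp
    ring
  refine Tendsto.congr (fun n => (key n).symm) ?_
  have := ((tendsto_add_div_add a 1 one_pos).const_mul δ).mul (tendsto_add_div_add b c hc)
  simpa using this

lemma integrableOn_aux {p q b : ℝ} (hp : 0 < p) (hq : -1 < q) (hb : 0 < b) :
    IntegrableOn (fun x : ℝ => x ^ q * Real.exp (-b * x ^ p)) (Ioi 0) := by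
  set q' : ℝ := (q + 1) / p - 1 with hq'
  have h0 : 0 < (q + 1) / p := div_pos (by linarith) hp
  have h1 : IntegrableOn (fun y : ℝ => Real.exp (-y) * y ^ q') (Ioi 0) :=
    Real.GammaIntegral_convergent h0
  have h2 : IntegrableOn (fun y : ℝ => Real.exp (-(b * y)) * (b * y) ^ q') (Ioi 0) := by
    have := (integrableOn_Ioi_comp_mul_left_iff
      (fun y : ℝ => Real.exp (-y) * y ^ q') 0 hb).mpr
    simpa [mul_zero] using this (by simpa using h1)
  have h3 := (integrableOn_Ioi_comp_rpow_iff'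
    (fun y : ℝ => Real.exp (-(b * y)) * (b * y) ^ q') hp.ne').mpr h2
  have h4 : IntegrableOn (fun x : ℝ =>
      b ^ (-q') * (x ^ (p - 1) • (Real.exp (-(b * x ^ p)) * (b * x ^ p) ^ q'))) (Ioi 0) := by
    exact h3.const_mul (b ^ (-q') : ℝ)
  refine IntegrableOn.congr_fun h4 (fun x hx => ?_) measurableSet_Ioi
  have hx0 : (0:ℝ) < x := hx
  have hxp : (0:ℝ) < x ^ p := rpow_pos_of_pos hx0 p
  have e1 : (b * x ^ p) ^ q' = b ^ q' * (x ^ p) ^ q' := Real.mul_rpow hb.le hxp.le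
  have e2 : (x ^ p) ^ q' = x ^ (p * q') := (Real.rpow_mul hx0.le p q').symm
  have e3 : p - 1 + p * q' = q := by rw [hq', mul_sub, ← mul_div_assoc, mul_div_cancel_left₀ _ hp.ne']; ring
  have eb : b ^ (-q') * b ^ q' = 1 := by
    rw [← Real.rpow_add hb]; simp
  have ex : x ^ (p - 1) * x ^ (p * q') = x ^ q := by rw [← Real.rpow_add hx0, e3]
  simp only [smul_eq_mul]
  calc b ^ (-q') * (x ^ (p - 1) * (Real.exp (-(b * x ^ p)) * (b * x ^ p) ^ q'))
      = (b ^ (-q') * b ^ q') * ((x ^ (p - 1) * x ^ (p * q')) * Real.exp (-(b * x ^ p))) := by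
        rw [e1, e2]; ring
    _ = x ^ q * Real.exp (-b * x ^ p) := by rw [eb, ex, neg_mul]; ring

lemma integral_gamma_form {γb C α : ℝ} (hγb : 0 < γb) (hC : 0 < C) (hα : 0 < α)
    {Q : ℝ} (hQ : -1 < Q) :
    ∫ γ in Ioi (0:ℝ), (γ / γb) ^ Q * Real.exp (-(1/C) * (γ / γb) ^ (α/2))
      = γb * ((C ^ ((Q + 1) / (α/2)) * (2/α)) * Real.Gamma ((Q + 1) / (α/2))) := by
  have hα2 : (0:ℝ) < α / 2 := by positivity
  have hbC : (0:ℝ) < 1 / C := by positivity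
  have step : (∫ γ in Ioi (0:ℝ), (γ / γb) ^ Q * Real.exp (-(1/C) * (γ / γb) ^ (α/2)))
      = ∫ γ in Ioi (0:ℝ),
        (fun u : ℝ => u ^ Q * Real.exp (-(1/C) * u ^ (α/2))) (γb⁻¹ * γ) := by
    refine setIntegral_congr_fun measurableSet_Ioi (fun γ _ => ?_)
    rw [div_eq_inv_mul]
  rw [step, integral_comp_mul_left_Ioi
      (fun u : ℝ => u ^ Q * Real.exp (-(1/C) * u ^ (α/2))) 0 (inv_pos.mpr hγb), mul_zero,
    integral_rpow_mul_exp_neg_mul_rpow hα2 hQ hbC, smul_eq_mul, inv_inv]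
  have e1 : ((1:ℝ)/C) ^ (-(Q + 1) / (α/2)) = C ^ ((Q + 1) / (α/2)) := by
    rw [one_div, Real.inv_rpow hC.le, ← Real.rpow_neg hC.le, neg_div, neg_neg]
  rw [e1, one_div_div]

/-- Raw moments of the α-Beaulieu-Xie shadowed SNR density with an arbitrary
normalizing constant `C`. -/
theorem statement_3 (mX mY ΩX ΩY α γbar C : ℝ) (hmX : 0 < mX) (hmY : 0 < mY)
    (hΩX : 0 < ΩX) (hΩY : 0 < ΩY) (hα : 0 < α) (hγbar : 0 < γbar) (hC : 0 < C)
    (k : ℝ) (hk : 0 ≤ k) :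
    ∫ γ in Set.Ioi (0 : ℝ), γ ^ k * aBXpdf mX mY ΩX ΩY α γbar C γ
      = γbar ^ k * C ^ (2 * k / α) * (Real.Gamma (mX + 2 * k / α) / Real.Gamma mX) *
        (mY * ΩX / (mY * ΩX + mX * ΩY)) ^ mY *
        twoF1 mY (mX + 2 * k / α) mX (mX * ΩY / (mY * ΩX + mX * ΩY)) := by
  have hD0 : 0 < mY * ΩX + mX * ΩY := by positivity
  set δ : ℝ := mX * ΩY / (mY * ΩX + mX * ΩY) with hδdef
  set θ : ℝ := mY * ΩX / (mY * ΩX + mX * ΩY) with hθdef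
  have hδ0 : 0 < δ := by positivity
  have hδ1 : δ < 1 := by
    rw [hδdef, div_lt_one hD0]
    nlinarith [mul_pos hmY hΩX]
  set s : ℝ := mX + 2 * k / α with hsdef
  have hs0 : 0 < s := by positivity
  set K : ℝ := α * θ ^ mY / (2 * C ^ mX * Real.Gamma mX * γbar) with hK
  set Q : ℕ → ℝ := fun n => k + α * mX / 2 + α * n / 2 - 1 with hQdef
  set c : ℕ → ℝ := fun n =>
    γbar ^ k * (poch mY n / poch mX n) * (δ / C) ^ n / (n.factorial : ℝ) with hcdef
  set F : ℕ → ℝ → ℝ := fun n γ =>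
    c n * ((γ / γbar) ^ Q n * Real.exp (-(1/C) * (γ / γbar) ^ (α/2))) with hFdef
  set T : ℕ → ℝ := fun n =>
    (poch mY n * poch s n / poch mX n) * δ ^ n / (n.factorial : ℝ) with hTdef
  have hTsum : Summable T := summable_hyper hmY hs0 hmX hδ0 hδ1
  have hcpos : ∀ n, 0 < c n := fun n => by
    have h1 := poch_pos hmY n; have h2 := poch_pos hmX n
    have h4 : (0:ℝ) < n.factorial := by exact_mod_cast n.factorial_pos
    have : (0:ℝ) < δ / C := by positivity
    positivity
  have hQ1 : ∀ n : ℕ, -1 < Q n := fun n => by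
    have : (0:ℝ) ≤ α * n / 2 := by positivity
    simp only [hQdef]
    nlinarith [mul_pos hα hmX]
  -- pointwise identity on Ioi 0
  have hpt : ∀ γ ∈ Ioi (0:ℝ),
      γ ^ k * aBXpdf mX mY ΩX ΩY α γbar C γ = K * ∑' n, F n γ := by
    intro γ hγ
    have hγ0 : (0:ℝ) < γ := hγ
    have hu : (0:ℝ) < γ / γbar := by positivity
    have hu' : (0:ℝ) ≤ γ / γbar := hu.le
    have e0 : γ ^ k = γbar ^ k * (γ / γbar) ^ k := by
      rw [Real.div_rpow hγ0.le hγbar.le]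
      field_simp
    have e2 : ∀ n : ℕ, (γ / γbar) ^ Q n = (γ / γbar) ^ k *
        (γ / γbar) ^ (α * mX / 2 - 1) * (γ / γbar) ^ (α / 2 * (n:ℝ)) := by
      intro n
      rw [← Real.rpow_add hu, ← Real.rpow_add hu]
      congr 1
      simp only [hQdef]
      ring
    simp only [aBXpdf, oneF1]
    rw [← hδdef, ← hθdef, ← hK]
    have key : ∀ n : ℕ,
        (γ ^ k * (K * (γ / γbar) ^ (α * mX / 2 - 1) *
            Real.exp (-(1 / C) * (γ / γbar) ^ (α / 2)))) *
          (poch mY n / poch mX n * (δ / C * (γ / γbar) ^ (α / 2)) ^ n / (n.factorial : ℝ))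
        = K * F n γ := by
      intro n
      simp only [hFdef, hcdef, mul_pow]
      rw [← Real.rpow_natCast ((γ / γbar) ^ (α / 2)) n, ← Real.rpow_mul hu', e0, e2 n]
      ring
    calc γ ^ k * (K * (γ / γbar) ^ (α * mX / 2 - 1) *
            Real.exp (-(1 / C) * (γ / γbar) ^ (α / 2)) *
          ∑' n : ℕ, poch mY n / poch mX n *
            (δ / C * (γ / γbar) ^ (α / 2)) ^ n / (n.factorial : ℝ))
        = ∑' n : ℕ, (γ ^ k * (K * (γ / γbar) ^ (α * mX / 2 - 1) *
            Real.exp (-(1 / C) * (γ / γbar) ^ (α / 2)))) *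
          (poch mY n / poch mX n * (δ / C * (γ / γbar) ^ (α / 2)) ^ n / (n.factorial : ℝ)) := by
          rw [tsum_mul_left]; ring
      _ = ∑' n : ℕ, K * F n γ := tsum_congr key
      _ = K * ∑' n : ℕ, F n γ := tsum_mul_left
  -- value of each integral
  have hint : ∀ n : ℕ, (∫ γ in Ioi (0:ℝ), F n γ)
      = (γbar ^ k * γbar * (2/α) * C ^ s * Real.Gamma s) * T n := by
    intro n
    have h1 : (∫ γ in Ioi (0:ℝ), F n γ)
        = c n * ∫ γ in Ioi (0:ℝ),
            (γ / γbar) ^ Q n * Real.exp (-(1/C) * (γ / γbar) ^ (α/2)) := by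
      simp only [hFdef]
      rw [MeasureTheory.integral_const_mul]
    rw [h1, integral_gamma_form hγbar hC hα (hQ1 n)]
    have hQn : (Q n + 1) / (α/2) = s + (n:ℝ) := by
      simp only [hQdef, hsdef]
      field_simp
      ring
    rw [hQn, Gamma_add_nat hs0 n]
    have hCsn : C ^ (s + (n:ℝ)) = C ^ s * C ^ (n:ℕ) := by
      rw [Real.rpow_add hC, Real.rpow_natCast]
    rw [hCsn]
    simp only [hcdef, hTdef, div_pow]
    have hCn : (C:ℝ) ^ (n:ℕ) ≠ 0 := by positivity
    have hpX := (poch_pos hmX n).ne'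
    have hf : ((n.factorial : ℝ)) ≠ 0 := by positivity
    field_simp
  -- integrability
  have hIntOn : ∀ n : ℕ, IntegrableOn (F n) (Ioi 0) := by
    intro n
    have base := integrableOn_aux (by positivity : (0:ℝ) < α/2) (hQ1 n)
      (by positivity : (0:ℝ) < 1/C)
    have comp : IntegrableOn (fun γ : ℝ =>
        (fun u : ℝ => u ^ Q n * Real.exp (-(1/C) * u ^ (α/2))) (γbar⁻¹ * γ)) (Ioi 0) := by
      refine (integrableOn_Ioi_comp_mul_left_iff
        (fun u : ℝ => u ^ Q n * Real.exp (-(1/C) * u ^ (α/2))) 0 (inv_pos.mpr hγbar)).mpr ?_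
      simpa using base
    refine IntegrableOn.congr_fun (comp.const_mul (c n)) (fun x _ => ?_) measurableSet_Ioi
    simp only [hFdef, inv_mul_eq_div]
  -- norms
  have hnorm : ∀ n : ℕ, (∫ γ in Ioi (0:ℝ), ‖F n γ‖) = ∫ γ in Ioi (0:ℝ), F n γ := by
    intro n
    refine setIntegral_congr_fun measurableSet_Ioi (fun γ hγ => ?_)
    have hγ0 : (0:ℝ) < γ := hγ
    refine Real.norm_of_nonneg ?_
    simp only [hFdef]
    refine mul_nonneg (hcpos n).le ?_
    have h1 : (0:ℝ) < γ / γbar := by positivity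
    positivity
  -- interchange
  have hswap : (∫ γ in Ioi (0:ℝ), ∑' n : ℕ, F n γ)
      = ∑' n : ℕ, ∫ γ in Ioi (0:ℝ), F n γ := by
    refine (hasSum_integral_of_summable_integral_norm (fun n => hIntOn n) ?_).tsum_eq.symm
    refine Summable.congr ?_ (fun n => (hnorm n).symm)
    exact Summable.congr (hTsum.mul_left
      (γbar ^ k * γbar * (2/α) * C ^ s * Real.Gamma s)) (fun n => (hint n).symm)
  calc (∫ γ in Ioi (0:ℝ), γ ^ k * aBXpdf mX mY ΩX ΩY α γbar C γ)
      = ∫ γ in Ioi (0:ℝ), K * ∑' n : ℕ, F n γ :=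
        setIntegral_congr_fun measurableSet_Ioi hpt
    _ = K * ∫ γ in Ioi (0:ℝ), ∑' n : ℕ, F n γ := MeasureTheory.integral_const_mul _ _
    _ = K * ∑' n : ℕ, ∫ γ in Ioi (0:ℝ), F n γ := by rw [hswap]
    _ = K * ((γbar ^ k * γbar * (2/α) * C ^ s * Real.Gamma s) * ∑' n : ℕ, T n) := by
        rw [tsum_congr hint, tsum_mul_left]
    _ = γbar ^ k * C ^ (2 * k / α) * (Real.Gamma s / Real.Gamma mX) * θ ^ mY *
          twoF1 mY s mX δ := by
        rw [show twoF1 mY s mX δ = ∑' n : ℕ, T n from rfl, hK]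
        have hCs : C ^ s = C ^ mX * C ^ (2 * k / α) := by
          rw [hsdef, Real.rpow_add hC]
        rw [hCs]
        have h1 : Real.Gamma mX ≠ 0 := (Real.Gamma_pos_of_pos hmX).ne'
        have h2 : (C:ℝ) ^ mX ≠ 0 := (Real.rpow_pos_of_pos hC mX).ne'
        field_simp
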